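/- Under Assumptions A with ε_m < ε_M, the function ε ↦ log 𝒫(ε) is concave on the open interval (ε_m, ε_M); consequently it is continuous on (ε_m, ε_M). -/

import Mathlib

open Filter Set

set_option maxHeartbeats 4000000

/-- Under Assumptions A with `ε_m < ε_M`, the function `ε ↦ log 𝒫(ε)` is concave
on `(ε_m, ε_M)`; consequently it is continuous on `(ε_m, ε_M)`. -/
theorem logP_concave_continuous
    (p : ℕ → ℕ → ℕ) (A B : ℕ → ℕ) (K C : ℝ)
    (hK : 0 < K) (hpK : ∀ n, 1 ≤ n → ∀ m, (p n m : ℝ) ≤ K ^ n)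
    (hC : 0 < C)
    (hABle : ∀ n, 1 ≤ n → A n ≤ B n)
    (hBC : ∀ n, 1 ≤ n → (B n : ℝ) ≤ C * n)
    (hpos : ∀ n, 1 ≤ n → ∀ m, A n ≤ m → m ≤ B n → 0 < p n m)
    (hzero : ∀ n, 1 ≤ n → ∀ m, (m < A n ∨ B n < m) → p n m = 0)
    (hsuper : ∀ n₁ n₂, 1 ≤ n₁ → 1 ≤ n₂ → ∀ m₁ m₂,
      p n₁ m₁ * p n₂ m₂ ≤ p (n₁ + n₂) (m₁ + m₂))
    (εm εM : ℝ)
    (hεm : Tendsto (fun n : ℕ => (A n : ℝ) / n) atTop (nhds εm))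
    (hεM : Tendsto (fun n : ℕ => (B n : ℝ) / n) atTop (nhds εM))
    (hlt : εm < εM)
    (logP : ℝ → ℝ)
    (hP : ∀ ε ∈ Set.Ioo εm εM,
      Tendsto (fun n : ℕ => Real.log (p n ⌊ε * n⌋₊) / n) atTop (nhds (logP ε))) :
    ConcaveOn ℝ (Set.Ioo εm εM) logP ∧ ContinuousOn logP (Set.Ioo εm εM) := by
  have hεm0 : 0 ≤ εm := ge_of_tendsto' hεm fun n => by positivity
  -- For interior ε, eventually `⌊ε n⌋₊` lies in the positivity window.
  have hgood : ∀ ε ∈ Set.Ioo εm εM, ∀ᶠ n : ℕ in atTop,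
      1 ≤ n ∧ A n ≤ ⌊ε * n⌋₊ ∧ ⌊ε * n⌋₊ ≤ B n := by
    intro ε hε
    have hε0 : 0 ≤ ε := hεm0.trans hε.1.le
    have hlow : ∀ᶠ n : ℕ in atTop, (A n : ℝ) / n < (εm + ε) / 2 :=
      hεm.eventually_lt_const (by linarith [hε.1])
    have hhigh : ∀ᶠ n : ℕ in atTop, ε < (B n : ℝ) / n :=
      hεM.eventually_const_lt hε.2
    have hbig : ∀ᶠ n : ℕ in atTop, (1 : ℝ) ≤ (ε - εm) / 2 * n := by
      have : Tendsto (fun n : ℕ => (ε - εm) / 2 * n) atTop atTop :=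
        Tendsto.const_mul_atTop (by linarith [hε.1]) tendsto_natCast_atTop_atTop
      exact this.eventually_ge_atTop 1
    filter_upwards [hlow, hhigh, hbig, eventually_ge_atTop 1] with n h1 h2 h3 h4
    have hn0 : (0 : ℝ) < n := by exact_mod_cast h4
    refine ⟨h4, ?_, ?_⟩
    · have hA : (A n : ℝ) < (εm + ε) / 2 * n := by
        rw [div_lt_iff₀ hn0] at h1; linarith
      have hf : ε * n - 1 < (⌊ε * n⌋₊ : ℝ) := Nat.sub_one_lt_floor _
      have : (A n : ℝ) < (⌊ε * n⌋₊ : ℝ) := by nlinarith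
      exact_mod_cast this.le
    · have hB : ε * n < B n := by rw [lt_div_iff₀ hn0] at h2; linarith
      have : (⌊ε * n⌋₊ : ℝ) ≤ (B n : ℝ) := (Nat.floor_le (by positivity)).trans hB.le
      exact_mod_cast this
  have hconc : ConcaveOn ℝ (Set.Ioo εm εM) logP := by
    refine ⟨convex_Ioo _ _, ?_⟩
    intro x hx y hy a b ha hb hab
    rcases eq_or_lt_of_le ha with rfl | ha
    · have hb1 : b = 1 := by linarith
      simp [hb1]
    rcases eq_or_lt_of_le hb with rfl | hb
    · have ha1 : a = 1 := by linarith
      simp [ha1]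
    simp only [smul_eq_mul]
    set ε := a * x + b * y with hεdef
    have hε : ε ∈ Set.Ioo εm εM := (convex_Ioo εm εM) hx hy ha.le hb.le hab
    have hx0 : 0 ≤ x := hεm0.trans hx.1.le
    have hy0 : 0 ≤ y := hεm0.trans hy.1.le
    have hε0 : 0 ≤ ε := hεm0.trans hε.1.le
    set E : ℝ := x + y with hE
    have hE0 : 0 ≤ E := by positivity
    -- choose the correction block length L
    obtain ⟨L, ⟨⟨⟨h1L, h2L⟩, h3L, h4L⟩, hL1⟩⟩ :
        ∃ L : ℕ, (((A L : ℝ) / L < (εm + ε) / 2 ∧ (ε + εM) / 2 < (B L : ℝ) / L) ∧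
          (E + 2 ≤ (ε - εm) / 2 * L ∧ E + 2 ≤ (εM - ε) / 2 * L)) ∧ 1 ≤ L := by
      have h1 : ∀ᶠ n : ℕ in atTop, (A n : ℝ) / n < (εm + ε) / 2 :=
        hεm.eventually_lt_const (by linarith [hε.1])
      have h2 : ∀ᶠ n : ℕ in atTop, (ε + εM) / 2 < (B n : ℝ) / n :=
        hεM.eventually_const_lt (by linarith [hε.2])
      have h3 : ∀ᶠ n : ℕ in atTop, E + 2 ≤ (ε - εm) / 2 * n :=
        (Tendsto.const_mul_atTop (by linarith [hε.1])
          tendsto_natCast_atTop_atTop).eventually_ge_atTop _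
      have h4 : ∀ᶠ n : ℕ in atTop, E + 2 ≤ (εM - ε) / 2 * n :=
        (Tendsto.const_mul_atTop (by linarith [hε.2])
          tendsto_natCast_atTop_atTop).eventually_ge_atTop _
      exact (((h1.and h2).and (h3.and h4)).and (eventually_ge_atTop 1)).exists
    have hL0 : (0 : ℝ) < L := by exact_mod_cast hL1
    have hAL : (A L : ℝ) ≤ ε * L - (E + 1) := by
      rw [div_lt_iff₀ hL0] at h1L
      nlinarith
    have hBL : ε * L + (E + 2) ≤ (B L : ℝ) := by
      rw [lt_div_iff₀ hL0] at h2L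
      nlinarith
    -- the two block lengths
    set n1 : ℕ → ℕ := fun N => ⌊a * ((N : ℝ) - L)⌋₊ with hn1def
    set n2 : ℕ → ℕ := fun N => N - L - n1 N with hn2def
    have hinner : ∀ c : ℝ, 0 < c →
        Tendsto (fun N : ℕ => c * ((N : ℝ) - L)) atTop atTop := by
      intro c hc
      apply Tendsto.const_mul_atTop hc
      exact (tendsto_atTop_add_const_right atTop (-(L : ℝ))
        tendsto_natCast_atTop_atTop).congr (by intro n; ring)
    have hF1 : Tendsto n1 atTop atTop := tendsto_nat_floor_atTop.comp (hinner a ha)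
    have hn1ub : ∀ᶠ N : ℕ in atTop, (n1 N : ℝ) ≤ a * ((N : ℝ) - L) := by
      filter_upwards [eventually_ge_atTop L] with N hN
      exact Nat.floor_le (mul_nonneg ha.le (by
        rw [sub_nonneg]; exact_mod_cast hN))
    have hn1lb : ∀ N : ℕ, a * ((N : ℝ) - L) - 1 < n1 N := fun N => Nat.sub_one_lt_floor _
    have hn1le : ∀ᶠ N : ℕ in atTop, n1 N ≤ N - L ∧ L ≤ N := by
      filter_upwards [hn1ub, eventually_ge_atTop L] with N h hN
      refine ⟨?_, hN⟩
      have ha1 : a ≤ 1 := by linarith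
      have hNL : (0 : ℝ) ≤ (N : ℝ) - L := by rw [sub_nonneg]; exact_mod_cast hN
      have : (n1 N : ℝ) ≤ ((N - L : ℕ) : ℝ) := by
        rw [Nat.cast_sub hN]
        calc (n1 N : ℝ) ≤ a * ((N : ℝ) - L) := h
          _ ≤ 1 * ((N : ℝ) - L) := by nlinarith
          _ = (N : ℝ) - L := by ring
      exact_mod_cast this
    have hn2cast : ∀ᶠ N : ℕ in atTop, (n2 N : ℝ) = (N : ℝ) - L - n1 N := by
      filter_upwards [hn1le] with N ⟨h1, h2⟩
      show ((N - L - n1 N : ℕ) : ℝ) = (N : ℝ) - L - n1 N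
      rw [Nat.cast_sub h1, Nat.cast_sub h2]
    have hF2 : Tendsto n2 atTop atTop := by
      rw [← tendsto_natCast_atTop_iff (R := ℝ)]
      apply tendsto_atTop_mono' atTop ?_ (hinner b hb)
      filter_upwards [hn2cast, hn1ub] with N hc hu
      rw [hc]
      have hb1 : b = 1 - a := by linarith
      nlinarith
    -- limits of n1/N and n2/N
    have hdiv : ∀ c : ℝ, Tendsto (fun N : ℕ => c / N) atTop (nhds 0) :=
      fun c => tendsto_const_div_atTop_nhds_zero_nat c
    have hn1lim : Tendsto (fun N : ℕ => (n1 N : ℝ) / N) atTop (nhds a) := by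
      apply tendsto_of_tendsto_of_tendsto_of_le_of_le'
        (g := fun N : ℕ => a - (a * L) / N - 1 / N) (h := fun N : ℕ => a - (a * L) / N)
      · have : Tendsto (fun N : ℕ => a - (a * L) / N - 1 / N) atTop (nhds (a - 0 - 0)) :=
          (tendsto_const_nhds.sub (hdiv (a * L))).sub (hdiv 1)
        simpa using this
      · have : Tendsto (fun N : ℕ => a - (a * L) / N) atTop (nhds (a - 0)) :=
          tendsto_const_nhds.sub (hdiv (a * L))
        simpa using this
      · filter_upwards [eventually_ge_atTop 1] with N hN
        have hN0 : (0 : ℝ) < N := by exact_mod_cast hN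
        rw [le_div_iff₀ hN0]
        have h := hn1lb N
        have hexp : (a - a * L / N - 1 / N) * N = a * ((N : ℝ) - L) - 1 := by
          field_simp
        linarith [hexp ▸ h.le]
      · filter_upwards [hn1ub, eventually_ge_atTop 1] with N h hN
        have hN0 : (0 : ℝ) < N := by exact_mod_cast hN
        rw [div_le_iff₀ hN0]
        have hexp : (a - a * L / N) * N = a * ((N : ℝ) - L) := by field_simp
        linarith [hexp ▸ h]
    have hn2lim : Tendsto (fun N : ℕ => (n2 N : ℝ) / N) atTop (nhds b) := by
      have h0 : Tendsto (fun N : ℕ => 1 - (L : ℝ) / N - (n1 N : ℝ) / N) atTop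
          (nhds (1 - 0 - a)) := (tendsto_const_nhds.sub (hdiv L)).sub hn1lim
      have hb1 : b = 1 - 0 - a := by linarith
      rw [hb1]
      apply h0.congr'
      filter_upwards [hn2cast, eventually_ge_atTop 1] with N hc hN
      have hN0 : (0 : ℝ) < N := by exact_mod_cast hN
      rw [hc]
      field_simp
    -- the key eventual inequality
    have hkey : ∀ᶠ N : ℕ in atTop,
        Real.log (p (n1 N) ⌊x * (n1 N : ℝ)⌋₊) / N + Real.log (p (n2 N) ⌊y * (n2 N : ℝ)⌋₊) / N
          ≤ Real.log (p N ⌊ε * (N : ℝ)⌋₊) / N := by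
      filter_upwards [hF1.eventually (hgood x hx), hF2.eventually (hgood y hy),
        hn1ub, hn1le, hn2cast, eventually_ge_atTop (L + 1)] with N hgx hgy hub hle hcast hNL
      obtain ⟨hn1ge, hxA, hxB⟩ := hgx
      obtain ⟨hn2ge, hyA, hyB⟩ := hgy
      obtain ⟨hn1NL, hLN⟩ := hle
      have hN1 : 1 ≤ N := by omega
      have hN0 : (0 : ℝ) < N := by exact_mod_cast hN1
      set m1 := ⌊x * (n1 N : ℝ)⌋₊ with hm1def
      set m2 := ⌊y * (n2 N : ℝ)⌋₊ with hm2def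
      set M := ⌊ε * (N : ℝ)⌋₊ with hMdef
      have hm1ub : (m1 : ℝ) ≤ x * n1 N := Nat.floor_le (by positivity)
      have hm1lb : x * (n1 N : ℝ) - 1 < m1 := Nat.sub_one_lt_floor _
      have hm2ub : (m2 : ℝ) ≤ y * n2 N := Nat.floor_le (by positivity)
      have hm2lb : y * (n2 N : ℝ) - 1 < m2 := Nat.sub_one_lt_floor _
      have hMub : (M : ℝ) ≤ ε * N := Nat.floor_le (by positivity)
      have hMlb : ε * (N : ℝ) - 1 < M := Nat.sub_one_lt_floor _
      have hb1 : b = 1 - a := by linarith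
      have hn2ub : (n2 N : ℝ) ≤ b * ((N : ℝ) - L) + 1 := by
        rw [hcast, hb1]; nlinarith [hn1lb N]
      have hn2lb : b * ((N : ℝ) - L) ≤ (n2 N : ℝ) := by
        rw [hcast, hb1]; nlinarith [hub]
      have hxn1 : x * (n1 N : ℝ) ≤ x * (a * ((N : ℝ) - L)) :=
        mul_le_mul_of_nonneg_left hub hx0
      have hxn1' : x * (a * ((N : ℝ) - L) - 1) ≤ x * (n1 N : ℝ) :=
        mul_le_mul_of_nonneg_left (hn1lb N).le hx0
      have hyn2 : y * (n2 N : ℝ) ≤ y * (b * ((N : ℝ) - L) + 1) :=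
        mul_le_mul_of_nonneg_left hn2ub hy0
      have hyn2' : y * (b * ((N : ℝ) - L)) ≤ y * (n2 N : ℝ) :=
        mul_le_mul_of_nonneg_left hn2lb hy0
      have hid1 : x * (a * ((N : ℝ) - L)) + y * (b * ((N : ℝ) - L) + 1)
          = ε * N - ε * L + y := by rw [hεdef]; ring
      have hid2 : x * (a * ((N : ℝ) - L) - 1) + y * (b * ((N : ℝ) - L))
          = ε * N - ε * L - x := by rw [hεdef]; ring
      -- Step A : m1 + m2 + A L < M
      have hstepA : m1 + m2 + A L < M := by
        have hreal : ((m1 : ℝ) + m2 + A L) < M := by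
          have hEeq : E = x + y := hE
          linarith [hm1ub, hm2ub, hxn1, hyn2, hAL, hMlb]
        exact_mod_cast hreal
      -- Step B : M < m1 + m2 + B L
      have hstepB : M < m1 + m2 + B L := by
        have hreal : (M : ℝ) < (m1 : ℝ) + m2 + B L := by
          have hEeq : E = x + y := hE
          linarith [hm1lb, hm2lb, hxn1', hyn2', hBL, hMub]
        exact_mod_cast hreal
      set r := M - (m1 + m2) with hrdef
      have hsum : m1 + m2 + r = M := by omega
      have hrA : A L ≤ r := by omega
      have hrB : r ≤ B L := by omega
      have hp1 : 0 < p (n1 N) m1 := hpos _ hn1ge _ hxA hxB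
      have hp2 : 0 < p (n2 N) m2 := hpos _ hn2ge _ hyA hyB
      have hpr : 0 < p L r := hpos L hL1 r hrA hrB
      have hn2eq : n2 N = N - L - n1 N := rfl
      have hNsum : n1 N + n2 N + L = N := by omega
      have hchain : p (n1 N) m1 * p (n2 N) m2 ≤ p N M := by
        calc p (n1 N) m1 * p (n2 N) m2
            ≤ p (n1 N) m1 * p (n2 N) m2 * p L r := Nat.le_mul_of_pos_right _ hpr
          _ ≤ p (n1 N + n2 N) (m1 + m2) * p L r :=
              Nat.mul_le_mul_right _ (hsuper _ _ hn1ge hn2ge _ _)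
          _ ≤ p (n1 N + n2 N + L) (m1 + m2 + r) := hsuper _ _ (by omega) hL1 _ _
          _ = p N M := by rw [hNsum, hsum]
      have hlog : Real.log (p (n1 N) m1) + Real.log (p (n2 N) m2) ≤ Real.log (p N M) := by
        rw [← Real.log_mul (by exact_mod_cast hp1.ne') (by exact_mod_cast hp2.ne')]
        apply Real.log_le_log
        · exact_mod_cast Nat.mul_pos hp1 hp2
        · exact_mod_cast hchain
      rw [← add_div]
      exact div_le_div_of_nonneg_right hlog hN0.le
    -- pass to the limit
    have hlim1 : Tendsto (fun N : ℕ => Real.log (p (n1 N) ⌊x * (n1 N : ℝ)⌋₊) / N) atTop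
        (nhds (a * logP x)) := by
      have hcomp : Tendsto
          (fun N : ℕ => Real.log (p (n1 N) ⌊x * (n1 N : ℝ)⌋₊) / (n1 N : ℝ)) atTop
          (nhds (logP x)) := (hP x hx).comp hF1
      apply (hn1lim.mul hcomp).congr'
      filter_upwards [hF1.eventually_ge_atTop 1, eventually_ge_atTop 1] with N h hN
      have h1 : (n1 N : ℝ) ≠ 0 := by
        have : (0:ℝ) < n1 N := by exact_mod_cast h
        exact this.ne'
      have h2 : (N : ℝ) ≠ 0 := by
        have : (0:ℝ) < N := by exact_mod_cast hN
        exact this.ne'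
      field_simp
    have hlim2 : Tendsto (fun N : ℕ => Real.log (p (n2 N) ⌊y * (n2 N : ℝ)⌋₊) / N) atTop
        (nhds (b * logP y)) := by
      have hcomp : Tendsto
          (fun N : ℕ => Real.log (p (n2 N) ⌊y * (n2 N : ℝ)⌋₊) / (n2 N : ℝ)) atTop
          (nhds (logP y)) := (hP y hy).comp hF2
      apply (hn2lim.mul hcomp).congr'
      filter_upwards [hF2.eventually_ge_atTop 1, eventually_ge_atTop 1] with N h hN
      have h1 : (n2 N : ℝ) ≠ 0 := by
        have : (0:ℝ) < n2 N := by exact_mod_cast h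
        exact this.ne'
      have h2 : (N : ℝ) ≠ 0 := by
        have : (0:ℝ) < N := by exact_mod_cast hN
        exact this.ne'
      field_simp
    exact le_of_tendsto_of_tendsto (hlim1.add hlim2) (hP ε hε) hkey
  exact ⟨hconc, hconc.continuousOn isOpen_Ioo⟩
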